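/- arXiv:2301.08944 — 3 statements merged into one kernel-verified Lean document; each statement's English description precedes it below -/
import Mathlib

section
/- Let p ≥ 1 be an integer and let λ > 1. Then for every real polynomial g of degree at most p, the squared L² norm of g over the set I_λ \ Ī = (-λ,-1] ∪ [1,λ) is bounded by (1/2)·[(λ + √(λ²-1))^{2p+1} - 1] times the squared L² norm of g over I = (-1,1); that is, ∫_{1≤|x|<λ} g(x)² dx ≤ (1/2)[(λ+√(λ²-1))^{2p+1} - 1] ∫_{-1}^{1} g(x)² dx. -/
open MeasureTheory

open Polynomial Finset

section LegendreAux

noncomputable section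
namespace IDEaux

/-- `u k = (X²-1)^k` -/
def u (k : ℕ) : Polynomial ℝ := (X ^ 2 - 1) ^ k

/-- Legendre polynomial via Rodrigues' formula. -/
def L (k : ℕ) : Polynomial ℝ := C (((2:ℝ) ^ k * k.factorial)⁻¹) * derivative^[k] (u k)

lemma u_eq (k : ℕ) : u k = (X - C (1:ℝ)) ^ k * (X + C (1:ℝ)) ^ k := by
  rw [u, ← mul_pow]; congr 1; simp; ring

lemma iterate_derivative_u (k : ℕ) :
    derivative^[k] (u k) = ∑ j ∈ range (k + 1),
      ((k.factorial * (k.choose j) ^ 2) : ℕ) •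
        ((X - C (1:ℝ)) ^ j * (X + C (1:ℝ)) ^ (k - j)) := by
  rw [u_eq, Polynomial.iterate_derivative_mul]
  refine Finset.sum_congr rfl fun j hj => ?_
  have hjk : j ≤ k := Nat.lt_succ_iff.mp (Finset.mem_range.mp hj)
  rw [Polynomial.iterate_derivative_X_sub_pow, Polynomial.iterate_derivative_X_add_pow,
    Nat.sub_sub_self hjk]
  rw [smul_mul_assoc, mul_smul_comm, smul_smul, smul_smul]
  congr 1
  rw [Nat.descFactorial_eq_factorial_mul_choose k (k - j),
    Nat.descFactorial_eq_factorial_mul_choose k j, Nat.choose_symm hjk]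
  have h := Nat.choose_mul_factorial_mul_factorial hjk
  calc k.choose j * ((k - j).factorial * k.choose j) * (j.factorial * k.choose j)
      = (k.choose j * j.factorial * (k - j).factorial) * k.choose j ^ 2 := by ring
    _ = k.factorial * k.choose j ^ 2 := by rw [h]

end IDEaux

namespace IDEaux

lemma eval_L (k : ℕ) (x : ℝ) :
    (L k).eval x = ∑ j ∈ range (k + 1),
      ((k.choose j : ℝ))^2 * ((x - 1)/2) ^ j * ((x + 1)/2) ^ (k - j) := by
  rw [L, iterate_derivative_u]
  rw [eval_mul, eval_C, eval_finset_sum, Finset.mul_sum]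
  refine Finset.sum_congr rfl fun j hj => ?_
  have hjk : j ≤ k := Nat.lt_succ_iff.mp (Finset.mem_range.mp hj)
  rw [eval_smul]
  simp only [smul_eq_mul, eval_mul, eval_pow, eval_sub, eval_add, eval_X, eval_C]
  have h2 : ((2:ℝ)^k * k.factorial) ≠ 0 := by positivity
  have hkj : ((2:ℝ))^k = 2^j * 2^(k-j) := by
    rw [← pow_add]; congr 1; omega
  field_simp
  rw [nsmul_eq_mul, hkj, div_pow, div_pow]
  push_cast
  field_simp

/-- abbreviation for x + sqrt(x^2-1) -/
def nu (x : ℝ) : ℝ := x + Real.sqrt (x ^ 2 - 1)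

lemma nu_cont : Continuous nu := by
  unfold nu; fun_prop

lemma one_le_nu {x : ℝ} (hx : 1 ≤ x) : 1 ≤ nu x := by
  have : 0 ≤ Real.sqrt (x ^ 2 - 1) := Real.sqrt_nonneg _
  unfold nu; linarith

lemma L_eval_nonneg {x : ℝ} (hx : 1 ≤ x) (k : ℕ) : 0 ≤ (L k).eval x := by
  rw [eval_L]
  refine Finset.sum_nonneg fun j hj => ?_
  have h1 : (0:ℝ) ≤ (x - 1)/2 := by linarith
  have h2 : (0:ℝ) ≤ (x + 1)/2 := by linarith
  positivity

lemma L_eval_le {x : ℝ} (hx : 1 ≤ x) (k : ℕ) : (L k).eval x ≤ nu x ^ k := by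
  rw [eval_L]
  set s := Real.sqrt ((x - 1)/2) with hs
  set t := Real.sqrt ((x + 1)/2) with ht
  have h1 : (0:ℝ) ≤ (x - 1)/2 := by linarith
  have h2 : (0:ℝ) ≤ (x + 1)/2 := by linarith
  have hs2 : s ^ 2 = (x - 1)/2 := Real.sq_sqrt h1
  have ht2 : t ^ 2 = (x + 1)/2 := Real.sq_sqrt h2
  have hst : (s + t) ^ 2 = nu x := by
    have hmul : s * t = Real.sqrt (x ^ 2 - 1) / 2 := by
      rw [hs, ht, ← Real.sqrt_mul h1]
      rw [show ((x-1)/2 * ((x+1)/2)) = (x^2-1)/4 by ring]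
      rw [show ((x:ℝ)^2-1)/4 = (x^2-1) * (1/4) by ring]
      rw [Real.sqrt_mul (by nlinarith) (1/4)]
      rw [show (1/4 : ℝ) = (1/2)^2 by norm_num, Real.sqrt_sq (by norm_num)]
      ring
    have : (s + t)^2 = s^2 + t^2 + 2 * (s * t) := by ring
    rw [this, hs2, ht2, hmul, nu]; ring
  calc (∑ j ∈ range (k + 1), ((k.choose j : ℝ))^2 * ((x - 1)/2) ^ j * ((x + 1)/2) ^ (k - j))
      = ∑ j ∈ range (k + 1), ((k.choose j : ℝ) * s ^ j * t ^ (k - j))^2 := by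
        refine Finset.sum_congr rfl fun j hj => ?_
        rw [mul_pow, mul_pow, ← pow_mul, ← pow_mul, mul_comm j 2, mul_comm (k-j) 2,
          pow_mul, pow_mul, hs2, ht2]
    _ ≤ (∑ j ∈ range (k + 1), (k.choose j : ℝ) * s ^ j * t ^ (k - j))^2 := by
        refine Finset.sum_sq_le_sq_sum_of_nonneg fun j hj => ?_
        have hsn : 0 ≤ s := Real.sqrt_nonneg _
        have htn : 0 ≤ t := Real.sqrt_nonneg _
        positivity
    _ = ((s + t) ^ k)^2 := by
        congr 1
        rw [add_pow]
        refine Finset.sum_congr rfl fun j hj => ?_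
        ring
    _ = nu x ^ k := by rw [← pow_mul, mul_comm k 2, pow_mul, hst]

lemma L_eval_sq_le {x : ℝ} (hx : 1 ≤ x) (k : ℕ) : ((L k).eval x) ^ 2 ≤ nu x ^ (2 * k) := by
  have h1 := L_eval_nonneg hx k
  have h2 := L_eval_le hx k
  calc ((L k).eval x) ^ 2 ≤ (nu x ^ k) ^ 2 := by nlinarith
    _ = nu x ^ (2 * k) := by rw [← pow_mul, mul_comm]

lemma L_eval_neg (k : ℕ) (x : ℝ) : (L k).eval (-x) = (-1) ^ k * (L k).eval x := by
  rw [eval_L, eval_L, Finset.mul_sum]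
  rw [← Finset.sum_range_reflect]
  refine Finset.sum_congr rfl fun j hj => ?_
  have hjk : j ≤ k := Nat.lt_succ_iff.mp (Finset.mem_range.mp hj)
  have e1 : k + 1 - 1 - j = k - j := by omega
  have hx1 : ((-x - 1)/2 : ℝ) = -((x+1)/2) := by ring
  have hx2 : ((-x + 1)/2 : ℝ) = -((x-1)/2) := by ring
  rw [e1, Nat.sub_sub_self hjk, Nat.choose_symm hjk, hx1, hx2, neg_pow ((x+1)/2), neg_pow ((x-1)/2)]
  have hpow : (-1:ℝ)^(k-j) * (-1)^j = (-1)^k := by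
    rw [← pow_add]; congr 1; omega
  linear_combination (((k.choose j : ℝ))^2 * ((x+1)/2)^(k-j) * ((x-1)/2)^j) * hpow

end IDEaux

namespace IDEaux

lemma natDegree_u (k : ℕ) : (u k).natDegree ≤ 2 * k := by
  calc (u k).natDegree ≤ k * (X ^ 2 - 1 : Polynomial ℝ).natDegree := natDegree_pow_le
    _ ≤ k * 2 := by
        gcongr
        have : ((X:Polynomial ℝ) ^ 2 - 1) = X^2 - C 1 := by simp
        rw [this]
        exact (natDegree_X_pow_sub_C (n := 2) (r := (1:ℝ))).le
    _ = 2 * k := by ring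

lemma natDegree_L (k : ℕ) : (L k).natDegree ≤ k := by
  rw [L]
  calc (C (((2:ℝ) ^ k * k.factorial)⁻¹) * derivative^[k] (u k)).natDegree
      ≤ (C (((2:ℝ) ^ k * k.factorial)⁻¹)).natDegree + (derivative^[k] (u k)).natDegree :=
        natDegree_mul_le
    _ ≤ 0 + ((u k).natDegree - k) := by
        gcongr
        · exact (natDegree_C _).le
        · exact natDegree_iterate_derivative _ _
    _ ≤ k := by have := natDegree_u k; omega

lemma coeff_u (k : ℕ) : (u k).coeff (2 * k) = 1 := by
  have hm : (u k).Monic := by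
    apply Monic.pow
    have : ((X:Polynomial ℝ) ^ 2 - 1) = X^2 - C 1 := by simp
    rw [this]
    apply monic_X_pow_sub_C _ (by norm_num)
  have hdeg : (u k).natDegree = 2 * k := by
    rw [u]
    have : ((X:Polynomial ℝ) ^ 2 - 1) = X^2 - C 1 := by simp
    rw [this]
    rw [natDegree_pow, natDegree_X_pow_sub_C]
    ring
  rw [← hdeg]; exact hm

/-- leading coefficient of `L k` -/
def a (k : ℕ) : ℝ := (((2:ℝ) ^ k * k.factorial)⁻¹) * (2 * k).descFactorial k * 1

lemma coeff_L (k : ℕ) : (L k).coeff k = a k := by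
  rw [L, coeff_C_mul, Polynomial.coeff_iterate_derivative]
  have : (u k).coeff (k + k) = 1 := by rw [show k + k = 2 * k from by ring, coeff_u]
  rw [this, a]
  rw [show k + k = 2 * k from by ring]
  simp [nsmul_eq_mul]

lemma a_pos (k : ℕ) : 0 < a k := by
  rw [a]
  have h1 : (0:ℝ) < ((2:ℝ) ^ k * k.factorial)⁻¹ := by positivity
  have h2 : 0 < (2 * k).descFactorial k := by
    rcases Nat.eq_zero_or_pos ((2*k).descFactorial k) with h | h
    · exfalso
      have := Nat.descFactorial_eq_zero_iff_lt.mp h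
      omega
    · exact h
  have h2' : (0:ℝ) < ((2 * k).descFactorial k : ℝ) := by exact_mod_cast h2
  nlinarith

end IDEaux

namespace IDEaux

/-- The L² pairing on (-1,1). -/
def ip (f h : Polynomial ℝ) : ℝ := ∫ x in (-1:ℝ)..1, f.eval x * h.eval x

lemma ip_comm (f h : Polynomial ℝ) : ip f h = ip h f := by
  unfold ip
  congr 1; ext x; ring

lemma ip_C_mul (c : ℝ) (f h : Polynomial ℝ) : ip f (C c * h) = c * ip f h := by
  unfold ip
  rw [← intervalIntegral.integral_const_mul]
  congr 1; ext x; simp; ring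

lemma ip_zero (f : Polynomial ℝ) : ip f 0 = 0 := by
  unfold ip; simp

/-- Integration by parts for polynomials on [-1,1]. -/
lemma ip_derivative (f h : Polynomial ℝ) :
    ip f (derivative h) = f.eval 1 * h.eval 1 - f.eval (-1) * h.eval (-1)
      - ip (derivative f) h := by
  unfold ip
  exact intervalIntegral.integral_mul_deriv_eq_deriv_mul
    (fun x _ => f.hasDerivAt x) (fun x _ => h.hasDerivAt x)
    ((f.derivative.continuous).intervalIntegrable _ _)
    ((h.derivative.continuous).intervalIntegrable _ _)

/-- if (X-c)^n divides q then (X-c)^(n-m) divides the m-th derivative. -/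
lemma pow_dvd_iterate_derivative {c : ℝ} {n : ℕ} {q : Polynomial ℝ}
    (hq : (X - C c) ^ n ∣ q) (m : ℕ) : (X - C c) ^ (n - m) ∣ derivative^[m] q := by
  induction m generalizing q n with
  | zero => simpa using hq
  | succ m ih =>
    rw [Function.iterate_succ_apply]
    have step : (X - C c) ^ (n - 1) ∣ derivative q := by
      obtain ⟨r, rfl⟩ := hq
      rw [derivative_mul, derivative_pow]
      rcases n with _ | n
      · simp
      · refine dvd_add (Dvd.dvd.mul_right ?_ r) (Dvd.dvd.mul_right ?_ _)
        · simp only [Nat.add_sub_cancel, derivative_X_sub_C, mul_one]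
          exact Dvd.dvd.mul_left dvd_rfl _
        · exact pow_dvd_pow _ (by omega)
    have := ih step
    rwa [show n - 1 - m = n - (m + 1) from by omega] at this

lemma eval_iterate_derivative_u_eq_zero {k m : ℕ} (hm : m < k) {c : ℝ}
    (hc : c = 1 ∨ c = -1) : (derivative^[m] (u k)).eval c = 0 := by
  have hdvd : (X - C c) ^ k ∣ u k := by
    rw [u_eq]
    rcases hc with rfl | rfl
    · exact Dvd.dvd.mul_right dvd_rfl _
    · refine Dvd.dvd.mul_left ?_ _
      simp [sub_neg_eq_add]
  obtain ⟨r, hr⟩ := pow_dvd_iterate_derivative hdvd m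
  rw [hr]
  simp only [eval_mul, eval_pow, eval_sub, eval_X, eval_C, sub_self]
  rw [zero_pow (by omega), zero_mul]

/-- iterated integration by parts against the Rodrigues kernel. -/
lemma ip_iterate (k : ℕ) (f : Polynomial ℝ) :
    ∀ m, m ≤ k → ip f (derivative^[k] (u k)) =
      (-1) ^ m * ip (derivative^[m] f) (derivative^[k - m] (u k)) := by
  intro m
  induction m generalizing f with
  | zero => simp
  | succ m ih =>
    intro hm
    have h1 := ih f (by omega)
    have hkm : k - m = (k - (m + 1)) + 1 := by omega
    have h2 : derivative^[k - m] (u k) = derivative (derivative^[k - (m+1)] (u k)) := by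
      rw [hkm, Function.iterate_succ_apply']
    rw [h1, h2, ip_derivative]
    have hb1 : (derivative^[k - (m+1)] (u k)).eval 1 = 0 :=
      eval_iterate_derivative_u_eq_zero (by omega) (Or.inl rfl)
    have hb2 : (derivative^[k - (m+1)] (u k)).eval (-1) = 0 :=
      eval_iterate_derivative_u_eq_zero (by omega) (Or.inr rfl)
    rw [hb1, hb2]
    rw [show derivative (derivative^[m] f) = derivative^[m+1] f from
      (Function.iterate_succ_apply' derivative m f).symm]
    ring

end IDEaux

namespace IDEaux

lemma ip_L_of_lt {j k : ℕ} (h : j < k) : ip (L j) (L k) = 0 := by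
  rw [show L k = C (((2:ℝ) ^ k * k.factorial)⁻¹) * derivative^[k] (u k) from rfl, ip_C_mul]
  rw [ip_iterate k (L j) k le_rfl]
  have hz : derivative^[k] (L j) = 0 :=
    Polynomial.iterate_derivative_eq_zero (lt_of_le_of_lt (natDegree_L j) h)
  rw [Nat.sub_self, hz]
  have : ip (0 : Polynomial ℝ) (derivative^[0] (u k)) = 0 := by
    rw [ip_comm, ip_zero]
  rw [this]; ring

lemma ip_L_orth {j k : ℕ} (h : j ≠ k) : ip (L j) (L k) = 0 := by
  rcases lt_or_gt_of_ne h with h | h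
  · exact ip_L_of_lt h
  · rw [ip_comm]; exact ip_L_of_lt h

/-- Wallis-type integral -/
def W (k : ℕ) : ℝ := ∫ x in (-1:ℝ)..1, (1 - x ^ 2) ^ k

lemma integral_poly (q : Polynomial ℝ) (b c : ℝ) :
    ∫ x in b..c, (derivative q).eval x = q.eval c - q.eval b :=
  intervalIntegral.integral_eq_sub_of_hasDerivAt (fun x _ => q.hasDerivAt x)
    ((q.derivative.continuous).intervalIntegrable _ _)

lemma W_zero : W 0 = 2 := by
  unfold W; simp; norm_num

lemma W_succ (k : ℕ) : (2 * (k:ℝ) + 3) * W (k + 1) = (2 * k + 2) * W k := by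
  have key : derivative ((X : Polynomial ℝ) * (1 - X ^ 2) ^ (k + 1)) =
      C (2 * (k:ℝ) + 3) * (1 - X ^ 2) ^ (k + 1) - C (2 * (k:ℝ) + 2) * (1 - X ^ 2) ^ k := by
    have hd : derivative ((1:Polynomial ℝ) - X ^ 2) = C (-2) * X := by
      simp [derivative_X_pow]
      rw [← C_1, ← C_add]; norm_num
    rw [derivative_mul, derivative_pow, hd, derivative_X]
    simp only [Nat.add_sub_cancel, Nat.cast_add, Nat.cast_one, C_add, C_mul, C_neg, C_1,
      map_ofNat]
    rw [pow_succ ((1:Polynomial ℝ) - X^2) k]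
    ring
  have h1 := integral_poly ((X : Polynomial ℝ) * (1 - X ^ 2) ^ (k + 1)) (-1) 1
  rw [key] at h1
  have h2 : ∫ x in (-1:ℝ)..1,
      ((C (2 * (k:ℝ) + 3) * (1 - X ^ 2) ^ (k + 1) - C (2 * (k:ℝ) + 2) * (1 - X ^ 2) ^ k)).eval x
      = (2 * (k:ℝ) + 3) * W (k+1) - (2 * (k:ℝ) + 2) * W k := by
    have hi1 : IntervalIntegrable (fun x : ℝ => (1 - x ^ 2) ^ (k+1)) volume (-1) 1 := by
      apply Continuous.intervalIntegrable; fun_prop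
    have hi2 : IntervalIntegrable (fun x : ℝ => (1 - x ^ 2) ^ k) volume (-1) 1 := by
      apply Continuous.intervalIntegrable; fun_prop
    simp only [eval_sub, eval_mul, eval_C, eval_pow, eval_one, eval_X]
    rw [intervalIntegral.integral_sub ((hi1.const_mul _)) ((hi2.const_mul _)),
      intervalIntegral.integral_const_mul, intervalIntegral.integral_const_mul]
    rfl
  rw [h2] at h1
  have h3 : ((X : Polynomial ℝ) * (1 - X ^ 2) ^ (k + 1)).eval 1 -
      ((X : Polynomial ℝ) * (1 - X ^ 2) ^ (k + 1)).eval (-1) = 0 := by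
    simp
  rw [h3] at h1
  linarith

lemma W_val (k : ℕ) : W k = 2 * 4 ^ k * ((k.factorial : ℝ))^2 / (2 * k + 1).factorial := by
  induction k with
  | zero => simp [W_zero]
  | succ k ih =>
    have h := W_succ k
    have hfac1 : ((2 * (k+1) + 1).factorial : ℝ) =
        (2 * (k:ℝ) + 3) * ((2 * (k:ℝ) + 2) * (2 * k + 1).factorial) := by
      rw [show 2 * (k+1) + 1 = (2 * k + 1) + 1 + 1 from by ring]
      rw [Nat.factorial_succ, Nat.factorial_succ]
      push_cast
      ring
    have hfac2 : (((k+1).factorial : ℝ)) = ((k:ℝ) + 1) * k.factorial := by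
      rw [Nat.factorial_succ]; push_cast; ring
    have h3 : (0:ℝ) < 2 * (k:ℝ) + 3 := by positivity
    have hW : W (k+1) = (2 * (k:ℝ) + 2) * W k / (2 * (k:ℝ) + 3) := by
      field_simp
      linarith
    rw [hW, ih, hfac1]
    have hf : ((2 * k + 1).factorial : ℝ) > 0 := by positivity
    push_cast
    rw [hfac2]
    field_simp
    ring

lemma ip_L_self (k : ℕ) : ip (L k) (L k) = 2 / (2 * (k:ℝ) + 1) := by
  have h1 : ip (L k) (L k) = (((2:ℝ) ^ k * k.factorial)⁻¹) * ip (L k) (derivative^[k] (u k)) := by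
    rw [show L k = C (((2:ℝ) ^ k * k.factorial)⁻¹) * derivative^[k] (u k) from rfl, ip_C_mul]
  rw [ip_iterate k (L k) k le_rfl, Nat.sub_self] at h1
  have hdk : derivative^[k] (L k) = C ((k.factorial : ℝ) * a k) := by
    have hdeg : (derivative^[k] (L k)).natDegree = 0 := by
      have := Polynomial.natDegree_iterate_derivative (L k) k
      have := natDegree_L k
      omega
    have heq := Polynomial.eq_C_of_natDegree_le_zero (le_of_eq hdeg)
    rw [heq, Polynomial.coeff_iterate_derivative]
    congr 1
    rw [zero_add, coeff_L]
    simp [Nat.descFactorial_self, nsmul_eq_mul]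
  rw [hdk] at h1
  have hCu : ip (C ((k.factorial : ℝ) * a k)) (derivative^[0] (u k)) =
      ((k.factorial : ℝ) * a k) * (((-1:ℝ))^k * W k) := by
    rw [Function.iterate_zero_apply, ip_comm,
      show (C ((k.factorial : ℝ) * a k)) = C ((k.factorial : ℝ) * a k) * 1 from (mul_one _).symm,
      ip_C_mul]
    congr 1
    have he : ip (u k) 1 = ∫ x in (-1:ℝ)..1, ((-1:ℝ))^k * (1 - x^2)^k := by
      unfold ip u
      congr 1; ext x
      simp only [eval_mul, eval_one, mul_one, eval_pow, eval_sub, eval_X]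
      rw [show (x^2-1 : ℝ) = -(1-x^2) from by ring, neg_pow]
    rw [he, intervalIntegral.integral_const_mul]
    rfl
  rw [hCu] at h1
  rw [h1, W_val, a]
  have hfac1 : ((2 * k + 1).factorial : ℝ) = (2*(k:ℝ)+1) * (2*k).factorial := by
    rw [Nat.factorial_succ]; push_cast; ring
  have hdesc : (k.factorial : ℝ) * ((2 * k).descFactorial k : ℝ) = ((2*k).factorial : ℝ) := by
    have := Nat.factorial_mul_descFactorial (show k ≤ 2 * k from by omega)
    have h2 : 2 * k - k = k := by omega
    rw [h2] at this
    exact_mod_cast congrArg (fun n : ℕ => (n:ℝ)) this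
  have hk1 : (0:ℝ) < 2*(k:ℝ)+1 := by positivity
  have hkf : (0:ℝ) < (k.factorial : ℝ) := by positivity
  have h2kf : (0:ℝ) < ((2*k).factorial : ℝ) := by positivity
  rw [hfac1]
  field_simp
  have hsq : ((-1:ℝ))^k * ((-1:ℝ))^k = 1 := by
    rw [← pow_add, show k + k = 2 * k from by ring, pow_mul]
    norm_num
  have h4 : (4:ℝ)^k = 2^k * 2^k := by rw [← mul_pow]; norm_num
  linear_combination ((k.factorial:ℝ)*(((2*k).descFactorial k : ℝ))*(4:ℝ)^k) * hsq
    + ((4:ℝ)^k) * hdesc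
    + (((2*k).factorial : ℝ)) * h4

end IDEaux

namespace IDEaux

lemma exists_expansion (p : ℕ) : ∀ g : Polynomial ℝ, g.natDegree ≤ p →
    ∃ c : ℕ → ℝ, g = ∑ k ∈ range (p + 1), C (c k) * L k := by
  induction p with
  | zero =>
    intro g hg
    refine ⟨fun _ => g.coeff 0, ?_⟩
    rw [Finset.sum_range_one]
    have hL0 : L 0 = 1 := by
      unfold L u
      simp
    rw [hL0, mul_one]
    exact Polynomial.eq_C_of_natDegree_le_zero hg
  | succ p ih =>
    intro g hg
    set d : ℝ := g.coeff (p + 1) / a (p + 1) with hd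
    set h : Polynomial ℝ := g - C d * L (p + 1) with hh
    have ha : a (p + 1) ≠ 0 := (a_pos (p+1)).ne'
    have hcoeff : h.coeff (p + 1) = 0 := by
      rw [hh, Polynomial.coeff_sub, Polynomial.coeff_C_mul, coeff_L, hd]
      field_simp
      simp
    have hhdeg : h.natDegree ≤ p := by
      rw [Polynomial.natDegree_le_iff_coeff_eq_zero]
      intro m hm
      rcases Nat.lt_or_ge (p + 1) m with h1 | h1
      · rw [hh, Polynomial.coeff_sub, Polynomial.coeff_C_mul]
        have hg0 : g.coeff m = 0 :=
          Polynomial.coeff_eq_zero_of_natDegree_lt (lt_of_le_of_lt hg h1)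
        have hL0 : (L (p+1)).coeff m = 0 :=
          Polynomial.coeff_eq_zero_of_natDegree_lt (lt_of_le_of_lt (natDegree_L (p+1)) h1)
        rw [hg0, hL0]; ring
      · have : m = p + 1 := by omega
        rw [this]; exact hcoeff
    obtain ⟨c, hc⟩ := ih h hhdeg
    refine ⟨Function.update c (p + 1) d, ?_⟩
    rw [Finset.sum_range_succ]
    have hsum : ∑ k ∈ range (p + 1), C (Function.update c (p + 1) d k) * L k
        = ∑ k ∈ range (p + 1), C (c k) * L k := by
      refine Finset.sum_congr rfl fun k hk => ?_
      have hk' : k ≠ p + 1 := by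
        have := Finset.mem_range.mp hk; omega
      rw [Function.update_of_ne hk']
    rw [hsum, ← hc, hh, Function.update_self]
    ring

lemma ip_nonneg (g : Polynomial ℝ) : 0 ≤ ip g g := by
  unfold ip
  apply intervalIntegral.integral_nonneg (by norm_num)
  intro x _
  exact mul_self_nonneg _

set_option maxHeartbeats 1600000 in
/-- The Christoffel-function bound. -/
lemma christoffel (p : ℕ) (g : Polynomial ℝ) (hg : g.natDegree ≤ p) (x : ℝ) :
    (g.eval x) ^ 2 ≤ (∑ k ∈ range (p + 1), (2 * (k:ℝ) + 1) / 2 * ((L k).eval x) ^ 2) * ip g g := by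
  obtain ⟨c, hc⟩ := exists_expansion p g hg
  -- the squared norm
  have hipg : ip g g = ∑ k ∈ range (p + 1), (c k) ^ 2 * (2 / (2 * (k:ℝ) + 1)) := by
    rw [hc]
    unfold ip
    have hintegrand : ∀ y : ℝ,
        (∑ k ∈ range (p + 1), C (c k) * L k).eval y * (∑ k ∈ range (p + 1), C (c k) * L k).eval y
        = ∑ k ∈ range (p + 1), ∑ j ∈ range (p + 1),
            (c k * c j) * ((L k).eval y * (L j).eval y) := by
      intro y
      rw [Polynomial.eval_finset_sum, Finset.sum_mul_sum]
      refine Finset.sum_congr rfl fun k _ => Finset.sum_congr rfl fun j _ => ?_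
      simp only [eval_mul, eval_C]
      ring
    have hcont : ∀ k j : ℕ, Continuous fun y : ℝ =>
        (c k * c j) * ((L k).eval y * (L j).eval y) :=
      fun k j => continuous_const.mul (((L k).continuous).mul ((L j).continuous))
    rw [intervalIntegral.integral_congr (fun y _ => hintegrand y)]
    have hswap : (∫ y in (-1:ℝ)..1, ∑ k ∈ range (p + 1), ∑ j ∈ range (p + 1),
          (c k * c j) * ((L k).eval y * (L j).eval y))
        = ∑ k ∈ range (p + 1), ∫ y in (-1:ℝ)..1, ∑ j ∈ range (p + 1),
          (c k * c j) * ((L k).eval y * (L j).eval y) :=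
      intervalIntegral.integral_finset_sum
        (fun k _ => ((continuous_finset_sum _ (fun j _ => hcont k j)).intervalIntegrable (-1) 1))
    rw [hswap]
    have hinner : ∀ k ∈ range (p + 1),
        (∫ y in (-1:ℝ)..1, ∑ j ∈ range (p + 1), (c k * c j) * ((L k).eval y * (L j).eval y))
        = (c k) ^ 2 * (2 / (2 * (k:ℝ) + 1)) := by
      intro k hk
      have hswap2 : (∫ y in (-1:ℝ)..1, ∑ j ∈ range (p + 1),
            (c k * c j) * ((L k).eval y * (L j).eval y))
          = ∑ j ∈ range (p + 1), ∫ y in (-1:ℝ)..1,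
            (c k * c j) * ((L k).eval y * (L j).eval y) :=
        intervalIntegral.integral_finset_sum
          (fun j _ => (hcont k j).intervalIntegrable (-1) 1)
      rw [hswap2]
      have hterm : ∀ j ∈ range (p + 1),
          (∫ y in (-1:ℝ)..1, (c k * c j) * ((L k).eval y * (L j).eval y))
          = (c k * c j) * ip (L k) (L j) := by
        intro j _
        rw [intervalIntegral.integral_const_mul]
        rfl
      rw [Finset.sum_congr rfl hterm]
      rw [Finset.sum_eq_single k]
      · rw [ip_L_self]; ring
      · intro j _ hjk
        rw [ip_L_orth (Ne.symm hjk)]; ring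
      · intro hk'; exact absurd hk hk'
    exact Finset.sum_congr rfl hinner
  -- evaluation as a sum
  have heval : g.eval x = ∑ k ∈ range (p + 1), c k * (L k).eval x := by
    rw [hc, Polynomial.eval_finset_sum]
    refine Finset.sum_congr rfl fun k _ => ?_
    simp
  -- Cauchy-Schwarz
  have hCS := Finset.sum_mul_sq_le_sq_mul_sq (range (p + 1))
      (fun k => c k * Real.sqrt (2 / (2 * (k:ℝ) + 1)))
      (fun k => (L k).eval x / Real.sqrt (2 / (2 * (k:ℝ) + 1)))
  have hpos : ∀ k : ℕ, (0:ℝ) < 2 / (2 * (k:ℝ) + 1) := by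
    intro k; positivity
  have hsqrt : ∀ k : ℕ, Real.sqrt (2 / (2 * (k:ℝ) + 1)) ^ 2 = 2 / (2 * (k:ℝ) + 1) :=
    fun k => Real.sq_sqrt (hpos k).le
  have hsqrtne : ∀ k : ℕ, Real.sqrt (2 / (2 * (k:ℝ) + 1)) ≠ 0 :=
    fun k => ne_of_gt (Real.sqrt_pos.mpr (hpos k))
  have hlhs : (∑ k ∈ range (p + 1),
      (c k * Real.sqrt (2 / (2 * (k:ℝ) + 1))) *
        ((L k).eval x / Real.sqrt (2 / (2 * (k:ℝ) + 1)))) = g.eval x := by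
    rw [heval]
    refine Finset.sum_congr rfl fun k _ => ?_
    field_simp
  have hA : (∑ k ∈ range (p + 1), (c k * Real.sqrt (2 / (2 * (k:ℝ) + 1))) ^ 2) = ip g g := by
    rw [hipg]
    refine Finset.sum_congr rfl fun k _ => ?_
    rw [mul_pow, hsqrt]
  have hB : (∑ k ∈ range (p + 1), ((L k).eval x / Real.sqrt (2 / (2 * (k:ℝ) + 1))) ^ 2)
      = ∑ k ∈ range (p + 1), (2 * (k:ℝ) + 1) / 2 * ((L k).eval x) ^ 2 := by
    refine Finset.sum_congr rfl fun k _ => ?_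
    rw [div_pow, hsqrt]
    field_simp
  rw [hlhs, hA, hB] at hCS
  linarith [hCS]

end IDEaux

namespace IDEaux

lemma geom_ineq (p : ℕ) (hp : 1 ≤ p) {v : ℝ} (hv : 1 ≤ v) :
    (v^2 - 1) * (∑ k ∈ range (p+1), (2*(k:ℝ)+1) * v^(2*k)) ≤
      (2*(p:ℝ)+1) * v^(2*p+2) - (v^2-1) := by
  induction p, hp using Nat.le_induction with
  | base =>
    rw [show (1:ℕ)+1 = 2 from rfl, Finset.sum_range_succ, Finset.sum_range_one]
    norm_num
    nlinarith [sq_nonneg v, sq_nonneg (v^2-1)]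
  | succ p hp ih =>
    rw [Finset.sum_range_succ]
    have e1 : v^(2*(p+1)) = v^(2*p+2) := by ring_nf
    have e2 : v^(2*(p+1)+2) = v^(2*p+2) * v^2 := by
      rw [← pow_add]; ring_nf
    have hpow : (0:ℝ) ≤ v^(2*p+2) := by positivity
    rw [e1, e2]
    push_cast
    push_cast at ih
    nlinarith [ih, hpow, sq_nonneg v]

/-- the Christoffel majorant -/
def K (p : ℕ) (x : ℝ) : ℝ := ∑ k ∈ range (p+1), (2*(k:ℝ)+1)/2 * nu x ^ (2*k)

lemma K_cont (p : ℕ) : Continuous (K p) := by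
  apply continuous_finset_sum
  intro k _
  exact continuous_const.mul ((nu_cont).pow _)

lemma integral_K_le (p : ℕ) (hp : 1 ≤ p) {lam : ℝ} (hlam : 1 < lam) :
    ∫ x in (1:ℝ)..lam, K p x ≤ ((nu lam)^(2*p+1) - 1)/4 := by
  set Φ : ℝ → ℝ := fun y => ∫ x in (1:ℝ)..y, K p x with hΦdef
  have hΦ : ∀ y : ℝ, HasDerivAt Φ (K p y) y := by
    intro y
    exact intervalIntegral.integral_hasDerivAt_right
      ((K_cont p).intervalIntegrable _ _)
      ((K_cont p).stronglyMeasurableAtFilter _ _)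
      (K_cont p).continuousAt
  set F : ℝ → ℝ := fun y => (nu y)^(2*p+1)/4 - y/2 - Φ y with hFdef
  have hmono : MonotoneOn F (Set.Icc 1 lam) := by
    apply monotoneOn_of_hasDerivWithinAt_nonneg (convex_Icc 1 lam)
      (f' := fun x => (2*(p:ℝ)+1) * (nu x)^(2*p) * (1 + x / Real.sqrt (x^2-1)) / 4
        - 1/2 - K p x)
    · -- continuity
      apply ContinuousOn.sub
      apply ContinuousOn.sub
      · exact (((nu_cont).pow _).div_const 4).continuousOn
      · exact (continuous_id.div_const 2).continuousOn
      · exact (continuous_iff_continuousAt.mpr fun y => (hΦ y).continuousAt).continuousOn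
    · -- derivative
      rw [interior_Icc]
      intro x hx
      obtain ⟨hx1, hx2⟩ := hx
      have hxx : (0:ℝ) < x^2 - 1 := by nlinarith
      have hr : (0:ℝ) < Real.sqrt (x^2-1) := Real.sqrt_pos.mpr hxx
      have hinner : HasDerivAt (fun y : ℝ => y^2 - 1) (2*x) x := by
        simpa using (hasDerivAt_pow 2 x).sub_const 1
      have hsq : HasDerivAt (fun y : ℝ => Real.sqrt (y^2-1))
          (1 / (2 * Real.sqrt (x^2-1)) * (2*x)) x :=
        (Real.hasDerivAt_sqrt (ne_of_gt hxx)).comp x hinner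
      have hnu : HasDerivAt nu (1 + x / Real.sqrt (x^2-1)) x := by
        have := (hasDerivAt_id x).add hsq
        have he : 1 + 1 / (2 * Real.sqrt (x^2-1)) * (2*x) = 1 + x / Real.sqrt (x^2-1) := by
          field_simp
        rw [he] at this
        exact this
      have hpow : HasDerivAt (fun y : ℝ => (nu y)^(2*p+1))
          ((2*(p:ℝ)+1) * (nu x)^(2*p) * (1 + x / Real.sqrt (x^2-1))) x := by
        have := hnu.pow (2*p+1)
        have he : ((2*p+1 : ℕ) : ℝ) * nu x ^ (2*p+1-1) * (1 + x / Real.sqrt (x^2-1))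
            = (2*(p:ℝ)+1) * (nu x)^(2*p) * (1 + x / Real.sqrt (x^2-1)) := by
          norm_num
        rw [he] at this
        exact this
      exact (((hpow.div_const 4).sub ((hasDerivAt_id x).div_const 2)).sub (hΦ x)).hasDerivWithinAt
    · -- nonnegativity of the derivative
      rw [interior_Icc]
      intro x hx
      obtain ⟨hx1, hx2⟩ := hx
      have hxx : (0:ℝ) < x^2 - 1 := by nlinarith
      set r : ℝ := Real.sqrt (x^2-1) with hrdef
      have hr : (0:ℝ) < r := Real.sqrt_pos.mpr hxx
      have hr2 : r^2 = x^2 - 1 := Real.sq_sqrt hxx.le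
      set v : ℝ := nu x with hvdef
      have hv : 1 < v := by
        have : (0:ℝ) < r := hr
        simp only [hvdef, nu, ← hrdef]
        nlinarith
      have hv0 : (0:ℝ) < v := by linarith
      have hrv : v^2 - 1 = 2*r*v := by
        simp only [hvdef, nu, ← hrdef]
        nlinarith [hr2]
      set S : ℝ := ∑ k ∈ range (p+1), (2*(k:ℝ)+1) * v^(2*k) with hSdef
      have hKS : K p x = S / 2 := by
        rw [hSdef, K, Finset.sum_div]
        refine Finset.sum_congr rfl fun k _ => ?_
        rw [← hvdef]
        ring
      have hg := geom_ineq p hp hv.le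
      rw [← hSdef, hrv] at hg
      have he : (2*(p:ℝ)+1)*v^(2*p+2) = v*((2*(p:ℝ)+1)*v^(2*p+1)) := by
        rw [pow_succ]
        ring
      have hL : v*(2*r*S+2*r) = 2*r*v*S + 2*r*v := by ring
      have h2 : v * (2*r*S + 2*r) ≤ v * ((2*(p:ℝ)+1)*v^(2*p+1)) := by
        rw [hL, ← he]
        linarith
      have hkey : 2*r*S + 2*r ≤ (2*(p:ℝ)+1)*v^(2*p+1) :=
        le_of_mul_le_mul_left h2 hv0
      have h1x : 1 + x / r = v / r := by
        field_simp [hvdef, nu, ← hrdef]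
        ring_nf; rw [hvdef, nu, ← hrdef]; ring
      rw [h1x, hKS]
      have hA : (2*(p:ℝ)+1) * v^(2*p) * (v/r) / 4 - 1/2 - S/2
          = ((2*(p:ℝ)+1)*v^(2*p+1) - 2*r - 2*r*S)/(4*r) := by
        rw [pow_succ]
        field_simp
        ring
      rw [hA]
      apply div_nonneg _ (by positivity)
      linarith
  have hF1 : F 1 = -(1/4) := by
    have hnu1 : nu 1 = 1 := by
      simp [nu]
    have hphi1 : Φ 1 = 0 := intervalIntegral.integral_same
    simp only [hFdef, hnu1, hphi1, one_pow]
    norm_num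
  have hle := hmono (Set.left_mem_Icc.mpr hlam.le)
    (Set.right_mem_Icc.mpr hlam.le) hlam.le
  rw [hF1] at hle
  have : Φ lam ≤ (nu lam)^(2*p+1)/4 - lam/2 + 1/4 := by
    simp only [hFdef] at hle
    linarith
  have hlam2 : -lam/2 + 1/4 ≤ -(1/4) := by linarith
  calc Φ lam ≤ (nu lam)^(2*p+1)/4 - lam/2 + 1/4 := this
    _ ≤ ((nu lam)^(2*p+1) - 1)/4 := by linarith

end IDEaux


end

open IDEaux in
/-- One-dimensional inverse domain estimate (Lemma 3.5 / \cite[Lemma 2.3]{Ch20}):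
for a polynomial `g` of degree at most `p ≥ 1` and `λ > 1`,
`∫_{I_λ \ Ī} g² ≤ ½[(λ+√(λ²−1))^{2p+1} − 1] ∫_I g²` with `I = (-1,1)`, `I_λ = (-λ,λ)`. -/
theorem stmt_0 (p : ℕ) (hp : 1 ≤ p) (lam : ℝ) (hlam : 1 < lam)
    (g : Polynomial ℝ) (hg : g.natDegree ≤ p) :
    (∫ x in Set.Ioo (-lam) lam \ Set.Icc (-1 : ℝ) 1, (g.eval x) ^ 2) ≤
      (1 / 2) * ((lam + Real.sqrt (lam ^ 2 - 1)) ^ (2 * p + 1) - 1) *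
        ∫ x in Set.Ioo (-1 : ℝ) 1, (g.eval x) ^ 2 := by
  set B : ℝ := ∫ x in Set.Ioo (-1 : ℝ) 1, (g.eval x) ^ 2 with hBdef
  have hB : ip g g = B := by
    rw [hBdef]
    unfold ip
    rw [intervalIntegral.integral_of_le (by norm_num : (-1:ℝ) ≤ 1),
      MeasureTheory.integral_Ioc_eq_integral_Ioo]
    congr 1; ext x; rw [sq]
  have hBnn : 0 ≤ B := by
    rw [← hB]; exact ip_nonneg g
  have hgc : Continuous fun x : ℝ => (g.eval x) ^ 2 := (g.continuous).pow 2
  -- set decomposition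
  have hset : Set.Ioo (-lam) lam \ Set.Icc (-1:ℝ) 1 = Set.Ioo (-lam) (-1) ∪ Set.Ioo 1 lam := by
    ext x
    simp only [Set.mem_diff, Set.mem_Ioo, Set.mem_Icc, Set.mem_union, not_and, not_le]
    constructor
    · rintro ⟨⟨h1, h2⟩, h3⟩
      rcases lt_or_ge x (-1) with h4 | h4
      · exact Or.inl ⟨h1, h4⟩
      · exact Or.inr ⟨h3 h4, h2⟩
    · rintro (⟨h1, h2⟩ | ⟨h1, h2⟩)
      · exact ⟨⟨h1, by linarith⟩, fun h => by linarith⟩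
      · exact ⟨⟨by linarith, h2⟩, fun _ => h1⟩
  have hdisj : Disjoint (Set.Ioo (-lam) (-1:ℝ)) (Set.Ioo (1:ℝ) lam) := by
    rw [Set.disjoint_left]
    rintro x ⟨_, h2⟩ ⟨h3, _⟩
    linarith
  have hint1 : IntegrableOn (fun x : ℝ => (g.eval x) ^ 2) (Set.Ioo (-lam) (-1)) :=
    (hgc.integrableOn_Icc).mono_set Set.Ioo_subset_Icc_self
  have hint2 : IntegrableOn (fun x : ℝ => (g.eval x) ^ 2) (Set.Ioo 1 lam) :=
    (hgc.integrableOn_Icc).mono_set Set.Ioo_subset_Icc_self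
  rw [hset, MeasureTheory.setIntegral_union hdisj measurableSet_Ioo hint1 hint2]
  -- pointwise bounds
  have hptR : ∀ x ∈ Set.Ioo (1:ℝ) lam, (g.eval x) ^ 2 ≤ K p x * B := by
    intro x hx
    have hx1 : (1:ℝ) ≤ x := hx.1.le
    calc (g.eval x) ^ 2
        ≤ (∑ k ∈ range (p + 1), (2 * (k:ℝ) + 1) / 2 * ((L k).eval x) ^ 2) * ip g g :=
          christoffel p g hg x
      _ ≤ K p x * B := by
          rw [hB]
          apply mul_le_mul_of_nonneg_right _ hBnn
          apply Finset.sum_le_sum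
          intro k _
          have h := L_eval_sq_le hx1 k
          have : (0:ℝ) ≤ (2 * (k:ℝ) + 1) / 2 := by positivity
          calc (2 * (k:ℝ) + 1) / 2 * ((L k).eval x) ^ 2
              ≤ (2 * (k:ℝ) + 1) / 2 * nu x ^ (2 * k) := by gcongr
            _ = (2 * (k:ℝ) + 1) / 2 * nu x ^ (2 * k) := rfl
  have hptL : ∀ x ∈ Set.Ioo (-lam) (-1:ℝ), (g.eval x) ^ 2 ≤ K p (-x) * B := by
    intro x hx
    have hx1 : (1:ℝ) ≤ -x := by
      have := hx.2; linarith
    have hparity : ∀ k : ℕ, ((L k).eval x) ^ 2 = ((L k).eval (-x)) ^ 2 := by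
      intro k
      have := L_eval_neg k (-x)
      rw [neg_neg] at this
      rw [this, mul_pow, ← pow_mul, mul_comm k 2, pow_mul]
      norm_num
    calc (g.eval x) ^ 2
        ≤ (∑ k ∈ range (p + 1), (2 * (k:ℝ) + 1) / 2 * ((L k).eval x) ^ 2) * ip g g :=
          christoffel p g hg x
      _ ≤ K p (-x) * B := by
          rw [hB]
          apply mul_le_mul_of_nonneg_right _ hBnn
          apply Finset.sum_le_sum
          intro k _
          rw [hparity k]
          have h := L_eval_sq_le hx1 k
          have : (0:ℝ) ≤ (2 * (k:ℝ) + 1) / 2 := by positivity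
          gcongr
  -- integral bounds on each piece
  have hKint : ∀ lo hi : ℝ, IntegrableOn (fun x : ℝ => K p x * B) (Set.Ioo lo hi) :=
    fun lo hi => (((K_cont p).mul continuous_const).integrableOn_Icc).mono_set
      Set.Ioo_subset_Icc_self
  have hKintneg : IntegrableOn (fun x : ℝ => K p (-x) * B) (Set.Ioo (-lam) (-1)) :=
    ((((K_cont p).comp continuous_neg).mul continuous_const).integrableOn_Icc).mono_set
      Set.Ioo_subset_Icc_self
  have hIK := integral_K_le p hp hlam
  have hIooK : (∫ x in Set.Ioo (1:ℝ) lam, K p x) = ∫ x in (1:ℝ)..lam, K p x := by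
    rw [intervalIntegral.integral_of_le hlam.le, MeasureTheory.integral_Ioc_eq_integral_Ioo]
  have hR : (∫ x in Set.Ioo (1:ℝ) lam, (g.eval x) ^ 2) ≤ ((nu lam)^(2*p+1) - 1)/4 * B := by
    calc (∫ x in Set.Ioo (1:ℝ) lam, (g.eval x) ^ 2)
        ≤ ∫ x in Set.Ioo (1:ℝ) lam, K p x * B :=
          setIntegral_mono_on hint2 (hKint 1 lam) measurableSet_Ioo hptR
      _ = (∫ x in Set.Ioo (1:ℝ) lam, K p x) * B := by
          rw [MeasureTheory.integral_mul_const]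
      _ = (∫ x in (1:ℝ)..lam, K p x) * B := by rw [hIooK]
      _ ≤ ((nu lam)^(2*p+1) - 1)/4 * B := mul_le_mul_of_nonneg_right hIK hBnn
  have hL : (∫ x in Set.Ioo (-lam) (-1:ℝ), (g.eval x) ^ 2) ≤ ((nu lam)^(2*p+1) - 1)/4 * B := by
    have hnegint : (∫ x in Set.Ioo (-lam) (-1:ℝ), K p (-x)) = ∫ x in (1:ℝ)..lam, K p x := by
      rw [← MeasureTheory.integral_Ioc_eq_integral_Ioo,
        ← intervalIntegral.integral_of_le (by linarith : -lam ≤ (-1:ℝ))]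
      rw [intervalIntegral.integral_comp_neg (f := K p)]
      norm_num
    calc (∫ x in Set.Ioo (-lam) (-1:ℝ), (g.eval x) ^ 2)
        ≤ ∫ x in Set.Ioo (-lam) (-1:ℝ), K p (-x) * B :=
          setIntegral_mono_on hint1 hKintneg measurableSet_Ioo hptL
      _ = (∫ x in Set.Ioo (-lam) (-1:ℝ), K p (-x)) * B := by
          rw [MeasureTheory.integral_mul_const]
      _ = (∫ x in (1:ℝ)..lam, K p x) * B := by rw [hnegint]
      _ ≤ ((nu lam)^(2*p+1) - 1)/4 * B := mul_le_mul_of_nonneg_right hIK hBnn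
  have hnueq : nu lam = lam + Real.sqrt (lam ^ 2 - 1) := rfl
  rw [← hnueq]
  linarith [hL, hR]


end LegendreAux
end

section
/- Let Û and U be open subsets of ℝ³ and let Φ : Û → U be a C² diffeomorphism with Jacobian matrix DΦ and Jacobian determinant J = det(DΦ) ≠ 0 on Û. Let w : U → ℝ³ be a continuously differentiable vector field, and define the Piola-transformed field ŵ : Û → ℝ³ by ŵ(x̂) = J(x̂) · DΦ(x̂)⁻¹ · w(Φ(x̂)). Then for every x̂ ∈ Û, div̂ ŵ (x̂) = J(x̂) · (div w)(Φ(x̂)); equivalently, (∇·w)∘Φ = J⁻¹ ∇̂·( J DΦ⁻¹ (w∘Φ) ). -/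
open MeasureTheory

/-- The Jacobian matrix `DΦ(x)` of a map `Φ : ℝ³ → ℝ³`: `(DΦ)_{ij} = ∂_j Φ_i`. -/
noncomputable def jacobianMatrix (Φ : (Fin 3 → ℝ) → (Fin 3 → ℝ)) (x : Fin 3 → ℝ) :
    Matrix (Fin 3) (Fin 3) ℝ :=
  fun i j => fderiv ℝ Φ x (Pi.single j 1) i

/-- The divergence `div v = ∂₁v₁ + ∂₂v₂ + ∂₃v₃` of a vector field on `ℝ³`. -/
noncomputable def div3 (v : (Fin 3 → ℝ) → (Fin 3 → ℝ)) (x : Fin 3 → ℝ) : ℝ :=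
  ∑ i, fderiv ℝ v x (Pi.single i 1) i

/-- Divergence identity for the Piola transform: if `Φ : Û → U` is a `C²` diffeomorphism with
Jacobian `DΦ` and `J = det DΦ ≠ 0`, `w` is a `C¹` vector field on `U`, and
`ŵ(x̂) = J(x̂) DΦ(x̂)⁻¹ w(Φ(x̂))`, then `div̂ ŵ(x̂) = J(x̂) (div w)(Φ(x̂))` on `Û`. -/
theorem stmt_4 (Uhat U : Set (Fin 3 → ℝ)) (hUhat : IsOpen Uhat) (hU : IsOpen U)
    (Φ Ψ : (Fin 3 → ℝ) → (Fin 3 → ℝ))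
    (hΦ : ContDiffOn ℝ 2 Φ Uhat) (hΨ : ContDiffOn ℝ 2 Ψ U)
    (hbij : Set.BijOn Φ Uhat U) (hinv : Set.InvOn Ψ Φ Uhat U)
    (hJ : ∀ x ∈ Uhat, (jacobianMatrix Φ x).det ≠ 0)
    (w : (Fin 3 → ℝ) → (Fin 3 → ℝ)) (hw : ContDiffOn ℝ 1 w U)
    (what : (Fin 3 → ℝ) → (Fin 3 → ℝ))
    (hwhat : ∀ x ∈ Uhat,
      what x = (jacobianMatrix Φ x).det • (jacobianMatrix Φ x)⁻¹.mulVec (w (Φ x)))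
    (xhat : Fin 3 → ℝ) (hxhat : xhat ∈ Uhat) :
    div3 what xhat = (jacobianMatrix Φ xhat).det * div3 w (Φ xhat) := by
  have hΦat : ContDiffAt ℝ 2 Φ xhat := hΦ.contDiffAt (hUhat.mem_nhds hxhat)
  have hG1 : ContDiffAt ℝ 1 (fderiv ℝ Φ) xhat := hΦat.fderiv_right (by norm_num)
  have hG : HasFDerivAt (fderiv ℝ Φ) (fderiv ℝ (fderiv ℝ Φ) xhat) xhat :=
    (hG1.differentiableAt one_ne_zero).hasFDerivAt
  have hsymm : ∀ v u : Fin 3 → ℝ,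
      fderiv ℝ (fderiv ℝ Φ) xhat v u = fderiv ℝ (fderiv ℝ Φ) xhat u v := by
    intro v u
    refine second_derivative_symmetric_of_eventually (f := Φ) ?_ hG v u
    filter_upwards [hUhat.mem_nhds hxhat] with y hy
    exact ((hΦ.contDiffAt (hUhat.mem_nhds hy)).differentiableAt (by norm_num)).hasFDerivAt
  -- derivatives of the jacobian entries
  have haA : ∀ i j : Fin 3, HasFDerivAt (fun x => jacobianMatrix Φ x i j)
      (((ContinuousLinearMap.proj i).comp
        (ContinuousLinearMap.apply ℝ (Fin 3 → ℝ) (Pi.single j 1))).comp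
        (fderiv ℝ (fderiv ℝ Φ) xhat)) xhat := by
    intro i j
    exact (((ContinuousLinearMap.proj (R := ℝ) (φ := fun _ : Fin 3 => ℝ) i).comp
        (ContinuousLinearMap.apply ℝ (Fin 3 → ℝ) (Pi.single j 1))).hasFDerivAt).comp xhat hG
  -- chain rule for w ∘ Φ components
  have hΦd : HasFDerivAt Φ (fderiv ℝ Φ xhat) xhat :=
    (hΦat.differentiableAt (by norm_num)).hasFDerivAt
  have hwd : HasFDerivAt w (fderiv ℝ w (Φ xhat)) (Φ xhat) :=
    ((hw.contDiffAt (hU.mem_nhds (hbij.mapsTo hxhat))).differentiableAt one_ne_zero).hasFDerivAt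
  have hu : ∀ j : Fin 3, HasFDerivAt (fun x => w (Φ x) j)
      ((ContinuousLinearMap.proj j).comp
        ((fderiv ℝ w (Φ xhat)).comp (fderiv ℝ Φ xhat))) xhat := fun j =>
    (ContinuousLinearMap.proj (R := ℝ) (φ := fun _ : Fin 3 => ℝ) j).hasFDerivAt.comp xhat
      (hwd.comp xhat hΦd)
  -- expansion of D(GΦ e_i) in coordinates
  have hDvec : ∀ i j : Fin 3,
      fderiv ℝ w (Φ xhat) (fderiv ℝ Φ xhat (Pi.single i 1)) j =
        jacobianMatrix Φ xhat 0 i * fderiv ℝ w (Φ xhat) (Pi.single 0 1) j +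
        jacobianMatrix Φ xhat 1 i * fderiv ℝ w (Φ xhat) (Pi.single 1 1) j +
        jacobianMatrix Φ xhat 2 i * fderiv ℝ w (Φ xhat) (Pi.single 2 1) j := by
    intro i j
    have hv : fderiv ℝ Φ xhat (Pi.single i 1) =
        jacobianMatrix Φ xhat 0 i • (Pi.single 0 1 : Fin 3 → ℝ) +
        jacobianMatrix Φ xhat 1 i • (Pi.single 1 1 : Fin 3 → ℝ) +
        jacobianMatrix Φ xhat 2 i • (Pi.single 2 1 : Fin 3 → ℝ) := by
      funext l
      fin_cases l <;> simp [jacobianMatrix, Pi.single_apply]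
    rw [hv]
    simp [smul_eq_mul]
  -- components of the Piola-transformed field
  have h0' : HasFDerivAt
      (fun x => (Matrix.adjugate (jacobianMatrix Φ x)).mulVec (w (Φ x)) 0) _ xhat :=
    (((((haA 1 1).mul (haA 2 2)).sub ((haA 1 2).mul (haA 2 1))).mul (hu 0)).add
      (((((haA 0 1).mul (haA 2 2)).neg).add ((haA 0 2).mul (haA 2 1))).mul (hu 1)) |>.add
      ((((haA 0 1).mul (haA 1 2)).sub ((haA 0 2).mul (haA 1 1))).mul (hu 2))).congr_of_eventuallyEq
      (Filter.Eventually.of_forall fun x => by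
        simp only [Matrix.adjugate_fin_three]
        simp [Matrix.mulVec, dotProduct, Fin.sum_univ_three]
        try ring)
  have h1' : HasFDerivAt
      (fun x => (Matrix.adjugate (jacobianMatrix Φ x)).mulVec (w (Φ x)) 1) _ xhat :=
    ((((((haA 1 0).mul (haA 2 2)).neg).add ((haA 1 2).mul (haA 2 0))).mul (hu 0)).add
      ((((haA 0 0).mul (haA 2 2)).sub ((haA 0 2).mul (haA 2 0))).mul (hu 1)) |>.add
      (((((haA 0 0).mul (haA 1 2)).neg).add ((haA 0 2).mul (haA 1 0))).mul (hu 2))).congr_of_eventuallyEq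
      (Filter.Eventually.of_forall fun x => by
        simp only [Matrix.adjugate_fin_three]
        simp [Matrix.mulVec, dotProduct, Fin.sum_univ_three]
        try ring)
  have h2' : HasFDerivAt
      (fun x => (Matrix.adjugate (jacobianMatrix Φ x)).mulVec (w (Φ x)) 2) _ xhat :=
    (((((haA 1 0).mul (haA 2 1)).sub ((haA 1 1).mul (haA 2 0))).mul (hu 0)).add
      (((((haA 0 0).mul (haA 2 1)).neg).add ((haA 0 1).mul (haA 2 0))).mul (hu 1)) |>.add
      ((((haA 0 0).mul (haA 1 1)).sub ((haA 0 1).mul (haA 1 0))).mul (hu 2))).congr_of_eventuallyEq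
      (Filter.Eventually.of_forall fun x => by
        simp only [Matrix.adjugate_fin_three]
        simp [Matrix.mulVec, dotProduct, Fin.sum_univ_three]
        try ring)
  -- what agrees with the adjugate form near xhat
  have hev : what =ᶠ[nhds xhat]
      (fun x i => (Matrix.adjugate (jacobianMatrix Φ x)).mulVec (w (Φ x)) i) := by
    refine Filter.eventuallyEq_of_mem (hUhat.mem_nhds hxhat) fun x hx => ?_
    rw [hwhat x hx, Matrix.inv_def, Ring.inverse_eq_inv, Matrix.smul_mulVec, smul_smul,
      mul_inv_cancel₀ (hJ x hx), one_smul]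
  have hdiff : ∀ i : Fin 3, DifferentiableAt ℝ
      (fun x => (Matrix.adjugate (jacobianMatrix Φ x)).mulVec (w (Φ x)) i) xhat := by
    intro i
    fin_cases i
    exacts [h0'.differentiableAt, h1'.differentiableAt, h2'.differentiableAt]
  have hfd := hev.fderiv_eq (𝕜 := ℝ)
  rw [div3, hfd, fderiv_pi hdiff]
  rw [Matrix.det_fin_three, show div3 w (Φ xhat) =
      fderiv ℝ w (Φ xhat) (Pi.single 0 1) 0 + fderiv ℝ w (Φ xhat) (Pi.single 1 1) 1 +
      fderiv ℝ w (Φ xhat) (Pi.single 2 1) 2 by simp [div3, Fin.sum_univ_three]]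
  rw [Fin.sum_univ_three]
  simp only [ContinuousLinearMap.pi_apply]
  rw [h0'.fderiv, h1'.fderiv, h2'.fderiv]
  simp only [ContinuousLinearMap.add_apply, ContinuousLinearMap.smul_apply,
    ContinuousLinearMap.sub_apply, ContinuousLinearMap.neg_apply,
    ContinuousLinearMap.comp_apply, ContinuousLinearMap.proj_apply,
    ContinuousLinearMap.apply_apply, smul_eq_mul, hDvec, Pi.mul_apply, Pi.sub_apply,
    Pi.neg_apply, Pi.add_apply]
  rw [hsymm (Pi.single 1 1) (Pi.single 0 1), hsymm (Pi.single 2 1) (Pi.single 0 1),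
    hsymm (Pi.single 2 1) (Pi.single 1 1)]
  ring
end

section
/- In the setting of the previous configuration, assume additionally δ₀ ∈ (0,1/2) and δ₀h₁ ≤ a_j ≤ (1−δ₀)h₁ for j = 1,2,3, δ₀h₃ ≤ c₄ ≤ (1−δ₀)h₃, and δ₀h₂ ≤ b₅ ≤ (1−δ₀)h₂. Then vol(T₁₁) ≥ (1/6)δ₀² h₁h₂h₃, vol(T₁₂) ≥ (1/6)δ₀² h₁h₂h₃, vol(T₁₃) ≥ (1/6)(δ₀+δ₀²)δ₀ h₁h₂h₃, vol(T₁₄) ≥ (1/6)δ₀ h₁h₂h₃, and vol(T₁₅) ≥ (1/6)δ₀² h₁h₂h₃. In particular each of the five tetrahedra has volume at least (1/6)δ₀²·vol(K). -/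
open MeasureTheory

open Matrix ENNReal Pointwise


def D3 : Set (Fin 3 → ℝ) := {x | 0 ≤ x 0 ∧ x 0 ≤ x 1 ∧ x 1 ≤ x 2 ∧ x 2 ≤ 1}

lemma volimg (M : Matrix (Fin 3) (Fin 3) ℝ) (s : Set (Fin 3 → ℝ)) :
    volume (Matrix.toLin' M '' s) = ENNReal.ofReal |M.det| * volume s := by
  rw [Measure.addHaar_image_linearMap, LinearMap.det_toLin']

lemma mem_img (M : Matrix (Fin 3) (Fin 3) ℝ) (x : Fin 3 → ℝ) (i j k : Fin 3)
    (h0 : 0 ≤ x i) (h1 : x i ≤ x j) (h2 : x j ≤ x k) (h3 : x k ≤ 1)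
    (hxy : M.mulVec ![x i, x j, x k] = x) : x ∈ Matrix.toLin' M '' D3 :=
  ⟨![x i, x j, x k], ⟨by simpa using h0, by simpa using h1, by simpa using h2,
    by simpa using h3⟩, by rw [Matrix.toLin'_apply, hxy]⟩

lemma one_le_6volD3 : 1 ≤ 6 * volume D3 := by
  set U : Matrix (Fin 3) (Fin 3) ℝ → Set (Fin 3 → ℝ) := fun M => Matrix.toLin' M '' D3 with hU
  have hcube : (Set.univ.pi fun _ : Fin 3 => Set.Icc (0:ℝ) 1) ⊆
      U !![1,0,0;0,1,0;0,0,1] ∪ U !![1,0,0;0,0,1;0,1,0] ∪ U !![0,1,0;0,0,1;1,0,0] ∪ U !![0,1,0;1,0,0;0,0,1]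
        ∪ U !![0,0,1;1,0,0;0,1,0] ∪ U !![0,0,1;0,1,0;1,0,0] := by
    intro x hx
    simp only [Set.mem_pi, Set.mem_univ, forall_true_left, Set.mem_Icc] at hx
    have h00 := (hx 0).1; have h01 := (hx 0).2
    have h10 := (hx 1).1; have h11 := (hx 1).2
    have h20 := (hx 2).1; have h21 := (hx 2).2
    have key : ∀ (M : Matrix (Fin 3) (Fin 3) ℝ) (i j k : Fin 3), 0 ≤ x i → x i ≤ x j →
        x j ≤ x k → x k ≤ 1 → M.mulVec ![x i, x j, x k] = x → x ∈ U M :=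
      fun M i j k a b c d e => mem_img M x i j k a b c d e
    rcases le_total (x 0) (x 1) with h1 | h1 <;> rcases le_total (x 1) (x 2) with h2 | h2
    · exact Or.inl <| Or.inl <| Or.inl <| Or.inl <| Or.inl <|
        key !![1,0,0;0,1,0;0,0,1] 0 1 2 h00 h1 h2 h21 (by funext a; fin_cases a <;>
          simp [Matrix.mulVec, dotProduct, Fin.sum_univ_three])
    · rcases le_total (x 0) (x 2) with h3 | h3
      · exact Or.inl <| Or.inl <| Or.inl <| Or.inl <| Or.inr <|
          key _ 0 2 1 h00 h3 h2 h11 (by funext a; fin_cases a <;>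
            simp [Matrix.mulVec, dotProduct, Fin.sum_univ_three])
      · exact Or.inl <| Or.inl <| Or.inl <| Or.inr <|
          key _ 2 0 1 h20 h3 h1 h11 (by funext a; fin_cases a <;>
            simp [Matrix.mulVec, dotProduct, Fin.sum_univ_three])
    · rcases le_total (x 0) (x 2) with h3 | h3
      · exact Or.inl <| Or.inl <| Or.inr <|
          key _ 1 0 2 h10 h1 h3 h21 (by funext a; fin_cases a <;>
            simp [Matrix.mulVec, dotProduct, Fin.sum_univ_three])
      · exact Or.inl <| Or.inr <|
          key _ 1 2 0 h10 h2 h3 h01 (by funext a; fin_cases a <;>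
            simp [Matrix.mulVec, dotProduct, Fin.sum_univ_three])
    · exact Or.inr <|
        key _ 2 1 0 h20 h2 h1 h01 (by funext a; fin_cases a <;>
          simp [Matrix.mulVec, dotProduct, Fin.sum_univ_three])
  have hvol : ∀ M : Matrix (Fin 3) (Fin 3) ℝ, |M.det| = 1 → volume (U M) = volume D3 := by
    intro M hM
    show volume (Matrix.toLin' M '' D3) = volume D3
    rw [volimg, hM]
    simp
  calc (1 : ℝ≥0∞) = volume (Set.univ.pi fun _ : Fin 3 => Set.Icc (0:ℝ) 1) := by
        rw [volume_pi_pi]; simp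
    _ ≤ volume (U !![1,0,0;0,1,0;0,0,1] ∪ U !![1,0,0;0,0,1;0,1,0] ∪ U !![0,1,0;0,0,1;1,0,0] ∪ U !![0,1,0;1,0,0;0,0,1]
        ∪ U !![0,0,1;1,0,0;0,1,0] ∪ U !![0,0,1;0,1,0;1,0,0]) := measure_mono hcube
    _ ≤ volume (U !![1,0,0;0,1,0;0,0,1]) + volume (U !![1,0,0;0,0,1;0,1,0]) + volume (U !![0,1,0;0,0,1;1,0,0])
        + volume (U !![0,1,0;1,0,0;0,0,1]) + volume (U !![0,0,1;1,0,0;0,1,0])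
        + volume (U !![0,0,1;0,1,0;1,0,0]) := by
        refine le_trans (measure_union_le _ _) ?_
        gcongr
        refine le_trans (measure_union_le _ _) ?_
        gcongr
        refine le_trans (measure_union_le _ _) ?_
        gcongr
        refine le_trans (measure_union_le _ _) ?_
        gcongr
        exact measure_union_le _ _
    _ = 6 * volume D3 := by
        rw [hvol _ (by rw [Matrix.det_fin_three]; simp), hvol _ (by rw [Matrix.det_fin_three]; simp),
          hvol _ (by rw [Matrix.det_fin_three]; simp),
          hvol _ (by rw [Matrix.det_fin_three]; simp),
          hvol _ (by rw [Matrix.det_fin_three]; simp),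
          hvol _ (by rw [Matrix.det_fin_three]; simp)]
        ring

noncomputable def S0 : Set (Fin 3 → ℝ) :=
  convexHull ℝ {0, Pi.single 0 1, Pi.single 1 1, Pi.single 2 1}

lemma corner_subset_S0 : {x : Fin 3 → ℝ | 0 ≤ x 0 ∧ 0 ≤ x 1 ∧ 0 ≤ x 2 ∧ x 0 + x 1 + x 2 ≤ 1}
    ⊆ S0 := by
  rintro x ⟨h0, h1, h2, hs⟩
  have := (convex_convexHull ℝ
      ({0, Pi.single 0 1, Pi.single 1 1, Pi.single 2 1} : Set (Fin 3 → ℝ))).sum_mem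
    (t := Finset.univ) (w := ![1 - (x 0 + x 1 + x 2), x 0, x 1, x 2])
    (z := ![0, Pi.single 0 1, Pi.single 1 1, Pi.single 2 1])
    (by intro i _; fin_cases i <;> simp <;> linarith)
    (by simp [Fin.sum_univ_four]; ring)
    (by intro i _; apply subset_convexHull; fin_cases i <;> simp)
  convert this using 1
  · rfl
  funext j
  simp [Fin.sum_univ_four, Pi.single_apply]
  fin_cases j <;> simp

lemma sixth_le_volS0 : ENNReal.ofReal (1/6 : ℝ) ≤ volume S0 := by
  have hD : D3 ⊆ Matrix.toLin' !![(1:ℝ),0,0;1,1,0;1,1,1] '' S0 := by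
    rintro x ⟨h0, h1, h2, h3⟩
    refine ⟨![x 0, x 1 - x 0, x 2 - x 1], corner_subset_S0 ⟨by simpa using h0,
      by simp; linarith, by simp; linarith, by simp; linarith⟩, ?_⟩
    rw [Matrix.toLin'_apply]
    funext a; fin_cases a <;>
      simp [Matrix.mulVec, dotProduct, Fin.sum_univ_three] <;> ring
  have h6 : (1:ENNReal) ≤ 6 * volume D3 := one_le_6volD3
  have hvd : volume D3 ≤ volume S0 := by
    calc volume D3 ≤ volume (Matrix.toLin' !![(1:ℝ),0,0;1,1,0;1,1,1] '' S0) := measure_mono hD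
      _ = volume S0 := by
          rw [volimg]
          rw [show |(!![(1:ℝ),0,0;1,1,0;1,1,1]).det| = 1 by
            rw [Matrix.det_fin_three]; simp]
          simp
  have : ENNReal.ofReal (1/6 : ℝ) ≤ volume D3 := by
    rw [show ENNReal.ofReal (1/6 : ℝ) = 1/6 by
      rw [ENNReal.ofReal_div_of_pos (by norm_num)]; norm_num]
    refine ENNReal.div_le_of_le_mul ?_
    rw [mul_comm]; exact h6
  exact this.trans hvd

lemma tet_vol (v₀ v₁ v₂ v₃ : Fin 3 → ℝ) (r : ℝ)
    (h : 6 * r ≤ |(Matrix.of ![v₁ - v₀, v₂ - v₀, v₃ - v₀]).det|) :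
    ENNReal.ofReal r ≤ volume (convexHull ℝ {v₀, v₁, v₂, v₃}) := by
  set M := (Matrix.of ![v₁ - v₀, v₂ - v₀, v₃ - v₀])ᵀ with hM
  have him : (convexHull ℝ {v₀, v₁, v₂, v₃} : Set (Fin 3 → ℝ)) =
      v₀ +ᵥ (Matrix.toLin' M '' S0) := by
    rw [S0, LinearMap.image_convexHull, ← convexHull_vadd]
    congr 1
    have e0 : Matrix.toLin' M (0 : Fin 3 → ℝ) = 0 := by simp
    have e1 : ∀ i : Fin 3, Matrix.toLin' M (Pi.single i 1) =
        ![v₁ - v₀, v₂ - v₀, v₃ - v₀] i := by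
      intro i
      funext a
      rw [Matrix.toLin'_apply]
      fin_cases i <;>
        simp [Matrix.mulVec, dotProduct, Pi.single_apply, hM, Fin.sum_univ_three, Matrix.transpose_apply, Matrix.vecHead, Matrix.vecTail, Function.comp]
    simp only [Set.image_insert_eq, Set.image_singleton, e0, e1]
    rw [show (v₀ +ᵥ ({0, ![v₁ - v₀, v₂ - v₀, v₃ - v₀] 0, ![v₁ - v₀, v₂ - v₀, v₃ - v₀] 1,
        ![v₁ - v₀, v₂ - v₀, v₃ - v₀] 2} : Set (Fin 3 → ℝ)))
        = (v₀ + ·) '' {0, ![v₁ - v₀, v₂ - v₀, v₃ - v₀] 0, ![v₁ - v₀, v₂ - v₀, v₃ - v₀] 1,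
        ![v₁ - v₀, v₂ - v₀, v₃ - v₀] 2} from rfl]
    simp only [Set.image_insert_eq, Set.image_singleton]
    have g0 : v₀ + (0 : Fin 3 → ℝ) = v₀ := by simp
    have g1 : v₀ + ![v₁ - v₀, v₂ - v₀, v₃ - v₀] 0 = v₁ := by simp
    have g2 : v₀ + ![v₁ - v₀, v₂ - v₀, v₃ - v₀] 1 = v₂ := by simp
    have g3 : v₀ + ![v₁ - v₀, v₂ - v₀, v₃ - v₀] 2 = v₃ := by simp
    rw [g0, g1, g2, g3]
  rw [him, measure_vadd, volimg]
  have hdet : |M.det| = |(Matrix.of ![v₁ - v₀, v₂ - v₀, v₃ - v₀]).det| := by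
    rw [hM, Matrix.det_transpose]
  rcases le_or_gt r 0 with hr | hr
  · simpa [ENNReal.ofReal_eq_zero.mpr hr] using zero_le _
  · have h1 : ENNReal.ofReal r = ENNReal.ofReal (6 * r) * ENNReal.ofReal (1/6 : ℝ) := by
      rw [← ENNReal.ofReal_mul (by linarith)]
      congr 1; ring
    rw [h1, hdet]
    exact mul_le_mul' (ENNReal.ofReal_le_ofReal h) sixth_le_volS0


set_option maxHeartbeats 1000000 in
/-- Lower volume bounds for the five tetrahedra in the decomposition of a large interface
element with parameter `δ₀` (proof of Lemma 3.3): each tetrahedron has volume at least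
`⅙δ₀²·vol(K)`, with the sharper bounds
`vol(T₁₁) ≥ ⅙δ₀²h₁h₂h₃`, `vol(T₁₂) ≥ ⅙δ₀²h₁h₂h₃`, `vol(T₁₃) ≥ ⅙(δ₀+δ₀²)δ₀h₁h₂h₃`,
`vol(T₁₄) ≥ ⅙δ₀h₁h₂h₃`, `vol(T₁₅) ≥ ⅙δ₀²h₁h₂h₃`. -/
theorem stmt_7 (h₁ h₂ h₃ a₁ a₂ a₃ c₄ b₅ δ₀ : ℝ)
    (hh₁ : 0 < h₁) (hh₂ : 0 < h₂) (hh₃ : 0 < h₃)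
    (hδ₀ : δ₀ ∈ Set.Ioo (0 : ℝ) (1 / 2))
    (ha₁ : δ₀ * h₁ ≤ a₁ ∧ a₁ ≤ (1 - δ₀) * h₁)
    (ha₂ : δ₀ * h₁ ≤ a₂ ∧ a₂ ≤ (1 - δ₀) * h₁)
    (ha₃ : δ₀ * h₁ ≤ a₃ ∧ a₃ ≤ (1 - δ₀) * h₁)
    (hc₄ : δ₀ * h₃ ≤ c₄ ∧ c₄ ≤ (1 - δ₀) * h₃)
    (hb₅ : δ₀ * h₂ ≤ b₅ ∧ b₅ ≤ (1 - δ₀) * h₂)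
    (A B C Z₁ Z₂ Z₃ Z₄ Z₅ : Fin 3 → ℝ)
    (hA : A = ![0, 0, 0]) (hB : B = ![0, 0, h₃]) (hC : C = ![0, h₂, h₃])
    (hZ₁ : Z₁ = ![a₁, 0, 0]) (hZ₂ : Z₂ = ![a₂, 0, h₃]) (hZ₃ : Z₃ = ![a₃, h₂, h₃])
    (hZ₄ : Z₄ = ![0, h₂, c₄]) (hZ₅ : Z₅ = ![0, b₅, 0])
    (T₁₁ T₁₂ T₁₃ T₁₄ T₁₅ : Set (Fin 3 → ℝ))
    (hT₁₁ : T₁₁ = convexHull ℝ {B, A, Z₁, Z₅}) (hT₁₂ : T₁₂ = convexHull ℝ {B, Z₄, Z₃, C})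
    (hT₁₃ : T₁₃ = convexHull ℝ {B, Z₄, Z₁, Z₅}) (hT₁₄ : T₁₄ = convexHull ℝ {B, Z₁, Z₂, Z₄})
    (hT₁₅ : T₁₅ = convexHull ℝ {B, Z₄, Z₂, Z₃}) :
    (ENNReal.ofReal (1 / 6 * (δ₀ ^ 2 * (h₁ * h₂ * h₃))) ≤ volume T₁₁ ∧
     ENNReal.ofReal (1 / 6 * (δ₀ ^ 2 * (h₁ * h₂ * h₃))) ≤ volume T₁₂ ∧
     ENNReal.ofReal (1 / 6 * ((δ₀ + δ₀ ^ 2) * δ₀ * (h₁ * h₂ * h₃))) ≤ volume T₁₃ ∧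
     ENNReal.ofReal (1 / 6 * (δ₀ * (h₁ * h₂ * h₃))) ≤ volume T₁₄ ∧
     ENNReal.ofReal (1 / 6 * (δ₀ ^ 2 * (h₁ * h₂ * h₃))) ≤ volume T₁₅) ∧
    ∀ T ∈ ({T₁₁, T₁₂, T₁₃, T₁₄, T₁₅} : Set (Set (Fin 3 → ℝ))),
      ENNReal.ofReal (1 / 6 * (δ₀ ^ 2 * (h₁ * h₂ * h₃))) ≤ volume T := by
  obtain ⟨hd1, hd2⟩ := hδ₀
  have hhh : 0 < h₁ * h₂ * h₃ := by positivity
  have ha₁' : 0 < a₁ := lt_of_lt_of_le (by positivity) ha₁.1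
  have ha₂' : 0 < a₂ := lt_of_lt_of_le (by positivity) ha₂.1
  have ha₃' : 0 < a₃ := lt_of_lt_of_le (by positivity) ha₃.1
  have hb₅' : 0 < b₅ := lt_of_lt_of_le (by positivity) hb₅.1
  have hc₄' : 0 < c₄ := lt_of_lt_of_le (by positivity) hc₄.1
  have H11 : ENNReal.ofReal (1 / 6 * (δ₀ ^ 2 * (h₁ * h₂ * h₃))) ≤ volume T₁₁ := by
    rw [hT₁₁, hA, hB, hZ₁, hZ₅]
    apply tet_vol
    refine le_abs.mpr (Or.inr ?_)
    have k1 : δ₀ * h₁ * (δ₀ * h₂) ≤ a₁ * b₅ :=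
      mul_le_mul ha₁.1 hb₅.1 (by positivity) ha₁'.le
    have k2 := mul_le_mul_of_nonneg_right k1 hh₃.le
    simp [Matrix.det_fin_three, Matrix.vecHead, Matrix.vecTail, Function.comp, Pi.sub_apply]
    nlinarith [k2]
  have H12 : ENNReal.ofReal (1 / 6 * (δ₀ ^ 2 * (h₁ * h₂ * h₃))) ≤ volume T₁₂ := by
    rw [hT₁₂, hB, hZ₄, hZ₃, hC]
    apply tet_vol
    refine le_abs.mpr (Or.inr ?_)
    have k1 : δ₀ * h₁ * (δ₀ * h₃) ≤ a₃ * (h₃ - c₄) :=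
      mul_le_mul ha₃.1 (by linarith) (by positivity) ha₃'.le
    have k2 := mul_le_mul_of_nonneg_right k1 hh₂.le
    simp [Matrix.det_fin_three, Matrix.vecHead, Matrix.vecTail, Function.comp, Pi.sub_apply]
    nlinarith [k2]
  have H13 : ENNReal.ofReal (1 / 6 * ((δ₀ + δ₀ ^ 2) * δ₀ * (h₁ * h₂ * h₃))) ≤ volume T₁₃ := by
    rw [hT₁₃, hB, hZ₄, hZ₁, hZ₅]
    apply tet_vol
    refine le_abs.mpr (Or.inl ?_)
    have k1 : δ₀ * h₂ * (δ₀ * h₃) ≤ b₅ * c₄ :=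
      mul_le_mul hb₅.1 hc₄.1 (by positivity) hb₅'.le
    have k2 : h₃ * (δ₀ * h₂) ≤ h₃ * (h₂ - b₅) :=
      mul_le_mul_of_nonneg_left (by linarith) hh₃.le
    have k3 : δ₀ * h₂ * h₃ + δ₀ * h₂ * (δ₀ * h₃) ≤ h₃ * (h₂ - b₅) + b₅ * c₄ := by linarith
    have k4 : δ₀ * h₁ * (δ₀ * h₂ * h₃ + δ₀ * h₂ * (δ₀ * h₃)) ≤ a₁ * (h₃ * (h₂ - b₅) + b₅ * c₄) :=
      mul_le_mul ha₁.1 k3 (by positivity) ha₁'.le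
    simp [Matrix.det_fin_three, Matrix.vecHead, Matrix.vecTail, Function.comp, Pi.sub_apply]
    nlinarith [k4]
  have H14 : ENNReal.ofReal (1 / 6 * (δ₀ * (h₁ * h₂ * h₃))) ≤ volume T₁₄ := by
    rw [hT₁₄, hB, hZ₁, hZ₂, hZ₄]
    apply tet_vol
    refine le_abs.mpr (Or.inr ?_)
    have k1 : δ₀ * h₁ * (h₂ * h₃) ≤ a₂ * (h₂ * h₃) :=
      mul_le_mul_of_nonneg_right ha₂.1 (by positivity)
    simp [Matrix.det_fin_three, Matrix.vecHead, Matrix.vecTail, Function.comp, Pi.sub_apply]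
    nlinarith [k1]
  have H15 : ENNReal.ofReal (1 / 6 * (δ₀ ^ 2 * (h₁ * h₂ * h₃))) ≤ volume T₁₅ := by
    rw [hT₁₅, hB, hZ₄, hZ₂, hZ₃]
    apply tet_vol
    refine le_abs.mpr (Or.inr ?_)
    have k1 : δ₀ * h₁ * (δ₀ * h₃) ≤ a₂ * (h₃ - c₄) :=
      mul_le_mul ha₂.1 (by linarith) (by positivity) ha₂'.le
    have k2 := mul_le_mul_of_nonneg_right k1 hh₂.le
    simp [Matrix.det_fin_three, Matrix.vecHead, Matrix.vecTail, Function.comp, Pi.sub_apply]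
    nlinarith [k2]
  refine ⟨⟨H11, H12, H13, H14, H15⟩, ?_⟩
  intro T hT
  simp only [Set.mem_insert_iff, Set.mem_singleton_iff] at hT
  rcases hT with rfl | rfl | rfl | rfl | rfl
  · exact H11
  · exact H12
  · refine le_trans (ENNReal.ofReal_le_ofReal ?_) H13
    nlinarith [mul_nonneg (pow_pos hd1 3).le hhh.le]
  · refine le_trans (ENNReal.ofReal_le_ofReal ?_) H14
    nlinarith [mul_nonneg (mul_nonneg hd1.le (by linarith : (0:ℝ) ≤ 1 - δ₀)) hhh.le]
  · exact H15
end
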